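/- In an idempotent residuated chain, if elements x and y do not commute (x·y ≠ y·x), then x and y lie in the same layer of the monoidal preorder: for every z, (z·x = x·z = z ≠ x) if and only if (z·y = y·z = z ≠ y), and (x·z = z·x = x ≠ z) if and only if (y·z = z·y = y ≠ z). -/
import Mathlib

/-- Transfer lemma for the lower part of a layer, stated for an abstract
associative conservative operation. -/
lemma layer_below {A : Type*} (m : A → A → A)
    (assoc : ∀ a b c : A, m (m a b) c = m a (m b c))
    (cons : ∀ a b : A, m a b = a ∨ m a b = b)
    (x y : A) (hxy : m x y = x) (hyx : m y x = y) (hne : x ≠ y)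
    (z : A) (h1 : m z x = z) (h2 : m x z = z) (h3 : z ≠ x) :
    m z y = z ∧ m y z = z ∧ z ≠ y := by
  refine ⟨?_, ?_, ?_⟩
  · calc m z y = m (m z x) y := by rw [h1]
      _ = m z (m x y) := assoc ..
      _ = z := by rw [hxy, h1]
  · rcases cons y z with h | h
    · exfalso
      apply h3
      have hx : m x z = x := by
        calc m x z = m (m x y) z := by rw [hxy]
          _ = m x (m y z) := assoc ..
          _ = x := by rw [h, hxy]
      rw [h2] at hx
      exact hx
    · exact h
  · intro h
    apply hne
    rw [h] at h2
    rw [hxy] at h2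
    exact h2

/-- Transfer lemma for the upper part of a layer, stated for an abstract
associative conservative operation. -/
lemma layer_above {A : Type*} (m : A → A → A)
    (assoc : ∀ a b c : A, m (m a b) c = m a (m b c))
    (cons : ∀ a b : A, m a b = a ∨ m a b = b)
    (x y : A) (hxy : m x y = x) (hyx : m y x = y) (hne : x ≠ y)
    (z : A) (h1 : m x z = x) (h2 : m z x = x) (h3 : x ≠ z) :
    m y z = y ∧ m z y = y ∧ y ≠ z := by
  have hzy : m z y = y := by
    rcases cons z y with h | h
    · exfalso
      apply h3
      calc x = m z x := h2.symm
        _ = m (m z y) x := by rw [h]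
        _ = m z (m y x) := assoc ..
        _ = m z y := by rw [hyx]
        _ = z := h
    · exact h
  refine ⟨?_, hzy, ?_⟩
  · rcases cons y z with h | h
    · exact h
    · exfalso
      apply hne
      calc x = m z x := h2.symm
        _ = m (m y z) x := by rw [h]
        _ = m y (m z x) := assoc ..
        _ = m y x := by rw [h2]
        _ = y := hyx
  · intro h
    apply hne
    rw [← h] at h2
    rw [hyx] at h2
    exact h2.symm

/-- In an idempotent residuated chain, non-commuting elements are on the same layer
of the monoidal preorder. -/
theorem stmt12 {A : Type*} [LinearOrder A] [Monoid A]
    (ld rd : A → A → A)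
    (resl : ∀ x y z : A, x * y ≤ z ↔ y ≤ ld x z)
    (resr : ∀ x y z : A, x * y ≤ z ↔ x ≤ rd z y)
    (idem : ∀ x : A, x * x = x) :
    ∀ x y : A, x * y ≠ y * x →
      ∀ z : A,
        ((z * x = z ∧ x * z = z ∧ z ≠ x) ↔ (z * y = z ∧ y * z = z ∧ z ≠ y)) ∧
        ((x * z = x ∧ z * x = x ∧ x ≠ z) ↔ (y * z = y ∧ z * y = y ∧ y ≠ z)) := by
  -- Multiplication is monotone in each argument, by residuation.
  have monoL : ∀ a b c : A, b ≤ c → a * b ≤ a * c := by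
    intro a b c h
    have h1 : c ≤ ld a (a * c) := (resl a c (a * c)).mp le_rfl
    exact (resl a b (a * c)).mpr (h.trans h1)
  have monoR : ∀ a b c : A, a ≤ b → a * c ≤ b * c := by
    intro a b c h
    have h1 : b ≤ rd (b * c) c := (resr b c (b * c)).mp le_rfl
    exact (resr a c (b * c)).mpr (h.trans h1)
  -- Conservativity: a * b ∈ {a, b}.
  have cons : ∀ a b : A, a * b = a ∨ a * b = b := by
    intro a b
    have eaab : a * (a * b) = a * b := by rw [← mul_assoc, idem]
    have eabb : (a * b) * b = a * b := by rw [mul_assoc, idem]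
    rcases le_total (a * b) 1 with h1 | h1
    · have ha : a * b ≤ a := by
        calc a * b = a * (a * b) := eaab.symm
          _ ≤ a * 1 := monoL _ _ _ h1
          _ = a := mul_one a
      have hb : a * b ≤ b := by
        calc a * b = (a * b) * b := eabb.symm
          _ ≤ 1 * b := monoR _ _ _ h1
          _ = b := one_mul b
      rcases le_total a b with h | h
      · left
        refine le_antisymm ha ?_
        calc a = a * a := (idem a).symm
          _ ≤ a * b := monoL _ _ _ h
      · right
        refine le_antisymm hb ?_
        calc b = b * b := (idem b).symm
          _ ≤ a * b := monoR _ _ _ h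
    · have ha : a ≤ a * b := by
        calc a = a * 1 := (mul_one a).symm
          _ ≤ a * (a * b) := monoL _ _ _ h1
          _ = a * b := eaab
      have hb : b ≤ a * b := by
        calc b = 1 * b := (one_mul b).symm
          _ ≤ (a * b) * b := monoR _ _ _ h1
          _ = a * b := eabb
      rcases le_total a b with h | h
      · right
        refine le_antisymm ?_ hb
        calc a * b ≤ b * b := monoR _ _ _ h
          _ = b := idem b
      · left
        refine le_antisymm ?_ ha
        calc a * b ≤ a * a := monoL _ _ _ h
          _ = a := idem a
  intro x y hcomm z
  have hne : x ≠ y := by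
    intro h; apply hcomm; rw [h]
  -- the opposite multiplication
  set mo : A → A → A := fun a b => b * a with hmo
  have assoco : ∀ a b c : A, mo (mo a b) c = mo a (mo b c) := by
    intro a b c; simp only [hmo]; rw [mul_assoc]
  have conso : ∀ a b : A, mo a b = a ∨ mo a b = b := by
    intro a b; rcases cons b a with h | h
    · right; exact h
    · left; exact h
  rcases cons x y with hxy | hxy <;> rcases cons y x with hyx | hyx
  · -- Case A: x * y = x, y * x = y.
    constructor
    · constructor
      · rintro ⟨h1, h2, h3⟩
        exact layer_below (· * ·) mul_assoc cons x y hxy hyx hne z h1 h2 h3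
      · rintro ⟨h1, h2, h3⟩
        exact layer_below (· * ·) mul_assoc cons y x hyx hxy hne.symm z h1 h2 h3
    · constructor
      · rintro ⟨h1, h2, h3⟩
        exact layer_above (· * ·) mul_assoc cons x y hxy hyx hne z h1 h2 h3
      · rintro ⟨h1, h2, h3⟩
        exact layer_above (· * ·) mul_assoc cons y x hyx hxy hne.symm z h1 h2 h3
  · exact absurd (hxy.trans hyx.symm) hcomm
  · exact absurd (hxy.trans hyx.symm) hcomm
  · -- Case B: x * y = y, y * x = x. Use the opposite multiplication.
    have hxy' : mo x y = x := hyx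
    have hyx' : mo y x = y := hxy
    constructor
    · constructor
      · rintro ⟨h1, h2, h3⟩
        obtain ⟨g1, g2, g3⟩ := layer_below mo assoco conso x y hxy' hyx' hne z h2 h1 h3
        exact ⟨g2, g1, g3⟩
      · rintro ⟨h1, h2, h3⟩
        obtain ⟨g1, g2, g3⟩ := layer_below mo assoco conso y x hyx' hxy' hne.symm z h2 h1 h3
        exact ⟨g2, g1, g3⟩
    · constructor
      · rintro ⟨h1, h2, h3⟩
        obtain ⟨g1, g2, g3⟩ := layer_above mo assoco conso x y hxy' hyx' hne z h2 h1 h3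
        exact ⟨g2, g1, g3⟩
      · rintro ⟨h1, h2, h3⟩
        obtain ⟨g1, g2, g3⟩ := layer_above mo assoco conso y x hyx' hxy' hne.symm z h2 h1 h3
        exact ⟨g2, g1, g3⟩
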